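/- arXiv:2008.00242 — 4 statements merged into one kernel-verified Lean document; each statement's English description precedes it below -/
import Mathlib

section
/- Fix y ∈ ℝⁿ, σ² > 0, and an n × (n+1) real matrix K. The function f₁(λ₀⁻¹, …, λₙ⁻¹) = exp(-½ yᵀ(σ² I + K D⁻¹ Kᵀ)⁻¹ y), where D = diag(λ₀, …, λₙ), is nondecreasing in each coordinate λᵢ⁻¹: if λᵢ⁻¹ ≤ μᵢ⁻¹ for all i, then f₁(λ₀⁻¹, …, λₙ⁻¹) ≤ f₁(μ₀⁻¹, …, μₙ⁻¹). -/
open Matrix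

lemma quad_nonneg {n : ℕ} {A : Matrix (Fin n) (Fin n) ℝ} (hA : A.PosSemidef)
    (x : Fin n → ℝ) : 0 ≤ x ⬝ᵥ (A *ᵥ x) := by
  simpa using hA.dotProduct_mulVec_nonneg x

lemma inv_quad_antitone {n : ℕ} {A B : Matrix (Fin n) (Fin n) ℝ}
    (hA : A.PosDef) (hB : B.PosDef)
    (hAB : ∀ x, x ⬝ᵥ (A *ᵥ x) ≤ x ⬝ᵥ (B *ᵥ x)) (y : Fin n → ℝ) :
    y ⬝ᵥ (B⁻¹ *ᵥ y) ≤ y ⬝ᵥ (A⁻¹ *ᵥ y) := by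
  set z := B⁻¹ *ᵥ y with hz
  set w := A⁻¹ *ᵥ y with hw
  have hBz : B *ᵥ z = y := by
    rw [hz, mulVec_mulVec, Matrix.mul_nonsing_inv B (isUnit_iff_ne_zero.mpr hB.det_pos.ne'),
      one_mulVec]
  have hAw : A *ᵥ w = y := by
    rw [hw, mulVec_mulVec, Matrix.mul_nonsing_inv A (isUnit_iff_ne_zero.mpr hA.det_pos.ne'),
      one_mulVec]
  have hAsymm : Aᵀ = A := by
    have := hA.isHermitian
    rwa [IsHermitian, conjTranspose_eq_transpose_of_trivial] at this
  have h1 : 0 ≤ (z - w) ⬝ᵥ (A *ᵥ (z - w)) := quad_nonneg hA.posSemidef _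
  have hwAz : w ⬝ᵥ (A *ᵥ z) = y ⬝ᵥ z := by
    rw [dotProduct_mulVec, ← mulVec_transpose, hAsymm, hAw]
  have hzAw : z ⬝ᵥ (A *ᵥ w) = z ⬝ᵥ y := by rw [hAw]
  have hexp : (z - w) ⬝ᵥ (A *ᵥ (z - w)) =
      z ⬝ᵥ (A *ᵥ z) - z ⬝ᵥ y - y ⬝ᵥ z + w ⬝ᵥ (A *ᵥ w) := by
    rw [mulVec_sub, sub_dotProduct, dotProduct_sub, dotProduct_sub, hwAz, hzAw]
    ring
  have hwAw : w ⬝ᵥ (A *ᵥ w) = w ⬝ᵥ y := by rw [hAw]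
  have hzBz : z ⬝ᵥ (B *ᵥ z) = z ⬝ᵥ y := by rw [hBz]
  have h2 := hAB z
  have hyz : y ⬝ᵥ z = z ⬝ᵥ y := dotProduct_comm _ _
  have hyw : y ⬝ᵥ w = w ⬝ᵥ y := dotProduct_comm _ _
  rw [hexp] at h1
  linarith

lemma quad_KDK {n : ℕ} (K : Matrix (Fin n) (Fin (n+1)) ℝ) (d : Fin (n+1) → ℝ)
    (x : Fin n → ℝ) :
    x ⬝ᵥ ((K * diagonal d * Kᵀ) *ᵥ x) = ∑ i, d i * (Kᵀ *ᵥ x) i ^ 2 := by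
  rw [← mulVec_mulVec, ← mulVec_mulVec, dotProduct_mulVec, ← mulVec_transpose]
  simp only [dotProduct, mulVec_diagonal, sq]
  exact Finset.sum_congr rfl fun i _ => by ring

theorem stmt10 {n : ℕ} (y : Fin n → ℝ) (σ2 : ℝ) (hσ : 0 < σ2)
    (K : Matrix (Fin n) (Fin (n+1)) ℝ) (l m : Fin (n+1) → ℝ)
    (hl : ∀ i, 0 < l i) (hm : ∀ i, 0 < m i)
    (h : ∀ i, (l i)⁻¹ ≤ (m i)⁻¹) :
    Real.exp (-(1/2) * (y ⬝ᵥ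
      ((σ2 • (1 : Matrix (Fin n) (Fin n) ℝ) + K * (Matrix.diagonal l)⁻¹ * Kᵀ)⁻¹ *ᵥ y))) ≤
    Real.exp (-(1/2) * (y ⬝ᵥ
      ((σ2 • (1 : Matrix (Fin n) (Fin n) ℝ) + K * (Matrix.diagonal m)⁻¹ * Kᵀ)⁻¹ *ᵥ y))) := by
  have hdl : (Matrix.diagonal l)⁻¹ = Matrix.diagonal (fun i => (l i)⁻¹) := by
    apply Matrix.inv_eq_right_inv
    rw [diagonal_mul_diagonal]
    simp only [← diagonal_one]
    exact congrArg Matrix.diagonal (funext fun i => mul_inv_cancel₀ (hl i).ne')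
  have hdm : (Matrix.diagonal m)⁻¹ = Matrix.diagonal (fun i => (m i)⁻¹) := by
    apply Matrix.inv_eq_right_inv
    rw [diagonal_mul_diagonal]
    simp only [← diagonal_one]
    exact congrArg Matrix.diagonal (funext fun i => mul_inv_cancel₀ (hm i).ne')
  have hsig : (σ2 • (1 : Matrix (Fin n) (Fin n) ℝ)).PosDef := by
    rw [smul_one_eq_diagonal]
    exact Matrix.PosDef.diagonal fun _ => hσ
  have hA : (σ2 • (1 : Matrix (Fin n) (Fin n) ℝ) + K * (Matrix.diagonal l)⁻¹ * Kᵀ).PosDef := by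
    rw [hdl]
    refine hsig.add_posSemidef ?_
    have := (Matrix.PosSemidef.diagonal (fun i => (inv_nonneg.mpr (hl i).le) :
      ∀ i, 0 ≤ (fun i => (l i)⁻¹) i)).mul_mul_conjTranspose_same K
    simpa [conjTranspose_eq_transpose_of_trivial] using this
  have hB : (σ2 • (1 : Matrix (Fin n) (Fin n) ℝ) + K * (Matrix.diagonal m)⁻¹ * Kᵀ).PosDef := by
    rw [hdm]
    refine hsig.add_posSemidef ?_
    have := (Matrix.PosSemidef.diagonal (fun i => (inv_nonneg.mpr (hm i).le) :
      ∀ i, 0 ≤ (fun i => (m i)⁻¹) i)).mul_mul_conjTranspose_same K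
    simpa [conjTranspose_eq_transpose_of_trivial] using this
  have hAB : ∀ x, x ⬝ᵥ ((σ2 • (1 : Matrix (Fin n) (Fin n) ℝ) + K * (Matrix.diagonal l)⁻¹ * Kᵀ) *ᵥ x)
      ≤ x ⬝ᵥ ((σ2 • (1 : Matrix (Fin n) (Fin n) ℝ) + K * (Matrix.diagonal m)⁻¹ * Kᵀ) *ᵥ x) := by
    intro x
    rw [hdl, hdm, add_mulVec, add_mulVec, dotProduct_add, dotProduct_add,
      quad_KDK, quad_KDK]
    refine add_le_add_right (Finset.sum_le_sum fun i _ => ?_) _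
    exact mul_le_mul_of_nonneg_right (h i) (sq_nonneg _)
  have key := inv_quad_antitone hA hB hAB y
  apply Real.exp_le_exp.mpr
  linarith
end

section
/- Fix y ∈ ℝⁿ, σ² > 0, an n × (n+1) matrix K, and let P_K = K (KᵀK)⁺ Kᵀ be the orthogonal projection onto the column space of K (using the Moore–Penrose pseudoinverse). For any positive λ₀, …, λₙ with D = diag(λ₀, …, λₙ): exp(-yᵀy/(2σ²)) ≤ exp(-½ yᵀ(σ² I + K D⁻¹ Kᵀ)⁻¹ y) ≤ exp(-yᵀ(I - P_K)y/(2σ²)). -/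
open Classical Matrix

/-- The Moore–Penrose pseudoinverse of a real matrix, defined via its four
characterizing properties (it exists and is unique for every real matrix). -/
noncomputable def moorePenrose {m n : ℕ} (A : Matrix (Fin m) (Fin n) ℝ) :
    Matrix (Fin n) (Fin m) ℝ :=
  if h : ∃ B : Matrix (Fin n) (Fin m) ℝ,
      A * B * A = A ∧ B * A * B = B ∧ (A * B)ᵀ = A * B ∧ (B * A)ᵀ = B * A
  then h.choose else 0

lemma exists_pinv {m : ℕ} (A : Matrix (Fin m) (Fin m) ℝ) (hA : A.IsHermitian) :
    ∃ B : Matrix (Fin m) (Fin m) ℝ,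
      A * B * A = A ∧ B * A * B = B ∧ (A * B)ᵀ = A * B ∧ (B * A)ᵀ = B * A := by
  classical
  set U : Matrix (Fin m) (Fin m) ℝ := (Matrix.IsHermitian.eigenvectorUnitary hA : Matrix (Fin m) (Fin m) ℝ) with hUdef
  have hU1 : star U * U = 1 := Unitary.coe_star_mul_self _
  have hU2 : U * star U = 1 := Unitary.coe_mul_star_self _
  set d : Fin m → ℝ := hA.eigenvalues with hd
  have spec : A = U * diagonal d * star U := by
    have := hA.spectral_theorem
    rw [Unitary.conjStarAlgAut_apply] at this
    exact this
  set d' : Fin m → ℝ := fun i => if d i = 0 then 0 else (d i)⁻¹ with hd'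
  have sandwich : ∀ e f : Fin m → ℝ,
      (U * diagonal e * star U) * (U * diagonal f * star U)
        = U * diagonal (fun i => e i * f i) * star U := by
    intro e f
    simp only [mul_assoc]
    rw [← mul_assoc (star U) U, hU1, one_mul, ← mul_assoc (diagonal e),
      diagonal_mul_diagonal]
  have hsU : star U = Uᵀ := by
    rw [star_eq_conjTranspose, conjTranspose_eq_transpose_of_trivial]
  have symm_sand : ∀ e : Fin m → ℝ, (U * diagonal e * star U)ᵀ = U * diagonal e * star U := by
    intro e
    simp [hsU, transpose_mul, diagonal_transpose, mul_assoc]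
  refine ⟨U * diagonal d' * star U, ?_, ?_, ?_, ?_⟩
  · rw [spec, sandwich, sandwich]
    have hv : (fun i => d i * d' i * d i) = d := by
      funext i
      by_cases h : d i = 0 <;> simp [hd', h]
    rw [hv]
  · rw [spec, sandwich, sandwich]
    have hv : (fun i => d' i * d i * d' i) = d' := by
      funext i
      by_cases h : d i = 0 <;> simp [hd', h]
    rw [hv]
  · rw [spec, sandwich, symm_sand]
  · rw [spec, sandwich, symm_sand]

lemma mul_cancel_KtK {n m p : ℕ} (K : Matrix (Fin n) (Fin m) ℝ)
    (X Y : Matrix (Fin m) (Fin p) ℝ) (h : Kᵀ * (K * X) = Kᵀ * (K * Y)) :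
    K * X = K * Y := by
  have hz : (K * X - K * Y)ᵀ * (K * X - K * Y) = 0 := by
    rw [transpose_sub, transpose_mul, transpose_mul, Matrix.sub_mul, Matrix.mul_sub, Matrix.mul_sub]
    simp only [Matrix.mul_assoc, h]
    abel
  have hz' : (K * X - K * Y)ᴴ * (K * X - K * Y) = 0 := by
    rwa [conjTranspose_eq_transpose_of_trivial]
  have := Matrix.conjTranspose_mul_self_eq_zero.mp hz'
  exact sub_eq_zero.mp this

lemma proj_props {n : ℕ} (K : Matrix (Fin n) (Fin (n+1)) ℝ) :
    (K * moorePenrose (Kᵀ * K) * Kᵀ)ᵀ = K * moorePenrose (Kᵀ * K) * Kᵀ ∧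
    (K * moorePenrose (Kᵀ * K) * Kᵀ) * (K * moorePenrose (Kᵀ * K) * Kᵀ)
      = K * moorePenrose (Kᵀ * K) * Kᵀ ∧
    (K * moorePenrose (Kᵀ * K) * Kᵀ) * K = K := by
  have hAH : (Kᵀ * K).IsHermitian := by
    rw [Matrix.IsHermitian, conjTranspose_eq_transpose_of_trivial, transpose_mul,
      transpose_transpose]
  have hex := exists_pinv (Kᵀ * K) hAH
  set A := Kᵀ * K with hAdef
  set B := moorePenrose A with hBdef
  obtain ⟨h1, h2, h3, h4⟩ : A * B * A = A ∧ B * A * B = B ∧ (A * B)ᵀ = A * B ∧ (B * A)ᵀ = B * A := by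
    rw [hBdef, moorePenrose, dif_pos hex]
    exact hex.choose_spec
  have hAt : Aᵀ = A := by rw [hAdef, transpose_mul, transpose_transpose]
  -- K * (B * A) = K
  have hKBA : K * (B * A) = K := by
    have := mul_cancel_KtK K (B * A) 1 ?_
    · simpa using this
    · rw [Matrix.mul_one, ← Matrix.mul_assoc, ← Matrix.mul_assoc, ← hAdef]
      exact h1
  -- B * A * Kᵀ = Kᵀ
  have hKt : B * A * Kᵀ = Kᵀ := by
    have := congrArg Matrix.transpose hKBA
    rwa [transpose_mul, h4] at this
  have hABt : A * Bᵀ = B * A := by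
    have := congrArg Matrix.transpose h4
    rw [transpose_transpose, transpose_mul, hAt] at this
    exact this.symm
  refine ⟨?_, ?_, ?_⟩
  · -- symmetry
    rw [transpose_mul, transpose_mul, transpose_transpose, ← Matrix.mul_assoc]
    calc K * Bᵀ * Kᵀ = K * (B * A) * Bᵀ * Kᵀ := by rw [hKBA]
      _ = K * B * (A * Bᵀ) * Kᵀ := by simp only [Matrix.mul_assoc]
      _ = K * B * (B * A) * Kᵀ := by rw [hABt]
      _ = K * B * (B * A * Kᵀ) := by simp only [Matrix.mul_assoc]
      _ = K * B * Kᵀ := by rw [hKt]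
  · calc K * B * Kᵀ * (K * B * Kᵀ) = K * B * (Kᵀ * K) * B * Kᵀ := by
          simp only [Matrix.mul_assoc]
      _ = K * (B * A * B) * Kᵀ := by rw [← hAdef]; simp only [Matrix.mul_assoc]
      _ = K * B * Kᵀ := by rw [h2, Matrix.mul_assoc]
  · calc K * B * Kᵀ * K = K * (B * A) := by rw [hAdef]; simp only [Matrix.mul_assoc]
      _ = K := hKBA

lemma psd_CS {n : ℕ} {M : Matrix (Fin n) (Fin n) ℝ} (hM : M.PosSemidef)
    (u w : Fin n → ℝ) :
    (u ⬝ᵥ (M *ᵥ w))^2 ≤ (u ⬝ᵥ (M *ᵥ u)) * (w ⬝ᵥ (M *ᵥ w)) := by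
  have hMt : Mᵀ = M := by
    rw [← conjTranspose_eq_transpose_of_trivial]; exact hM.1
  have hsym : ∀ a b : Fin n → ℝ, a ⬝ᵥ (M *ᵥ b) = b ⬝ᵥ (M *ᵥ a) := by
    intro a b
    rw [dotProduct_mulVec a M b, ← mulVec_transpose, hMt, dotProduct_comm]
  have key : ∀ t : ℝ, 0 ≤ (w ⬝ᵥ (M *ᵥ w)) * (t * t) + (2 * (u ⬝ᵥ (M *ᵥ w))) * t
      + u ⬝ᵥ (M *ᵥ u) := by
    intro t
    have h0 := hM.dotProduct_mulVec_nonneg (u + t • w)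
    simp only [star_trivial, mulVec_add, mulVec_smul, dotProduct_add, add_dotProduct,
      dotProduct_smul, smul_dotProduct, smul_eq_mul] at h0
    rw [hsym w u] at h0
    ring_nf at h0 ⊢
    linarith
  have hd := discrim_le_zero key
  rw [discrim] at hd
  nlinarith [hd]

theorem stmt11 {n : ℕ} (y : Fin n → ℝ) (σ2 : ℝ) (hσ : 0 < σ2)
    (K : Matrix (Fin n) (Fin (n+1)) ℝ) (l : Fin (n+1) → ℝ) (hl : ∀ i, 0 < l i) :
    Real.exp (-(y ⬝ᵥ y) / (2 * σ2)) ≤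
      Real.exp (-(1/2) * (y ⬝ᵥ
        ((σ2 • (1 : Matrix (Fin n) (Fin n) ℝ) + K * (Matrix.diagonal l)⁻¹ * Kᵀ)⁻¹ *ᵥ y))) ∧
    Real.exp (-(1/2) * (y ⬝ᵥ
        ((σ2 • (1 : Matrix (Fin n) (Fin n) ℝ) + K * (Matrix.diagonal l)⁻¹ * Kᵀ)⁻¹ *ᵥ y))) ≤
      Real.exp (-(y ⬝ᵥ (((1 : Matrix (Fin n) (Fin n) ℝ) -
        K * moorePenrose (Kᵀ * K) * Kᵀ) *ᵥ y)) / (2 * σ2)) := by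
  classical
  -- the inverse of the diagonal matrix
  have hD : (Matrix.diagonal l)⁻¹ = diagonal (fun i => (l i)⁻¹) := by
    apply Matrix.inv_eq_right_inv
    rw [diagonal_mul_diagonal]
    have : (fun i => l i * (l i)⁻¹) = fun _ => (1:ℝ) :=
      funext fun i => mul_inv_cancel₀ (hl i).ne'
    rw [this, diagonal_one]
  set M : Matrix (Fin n) (Fin n) ℝ :=
    σ2 • (1 : Matrix (Fin n) (Fin n) ℝ) + K * (Matrix.diagonal l)⁻¹ * Kᵀ with hMdef
  have hPSD : (K * (Matrix.diagonal l)⁻¹ * Kᵀ).PosSemidef := by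
    rw [hD]
    have h1 : (diagonal (fun i => (l i)⁻¹)).PosSemidef :=
      posSemidef_diagonal_iff.mpr fun i => le_of_lt (inv_pos.mpr (hl i))
    have := h1.mul_mul_conjTranspose_same K
    rwa [conjTranspose_eq_transpose_of_trivial] at this
  have hsm : (σ2 • (1 : Matrix (Fin n) (Fin n) ℝ)).PosDef := by
    refine PosDef.of_dotProduct_mulVec_pos ?_ ?_
    · rw [Matrix.IsHermitian, conjTranspose_eq_transpose_of_trivial, transpose_smul,
        transpose_one]
    · intro x hx
      have hxx : 0 < x ⬝ᵥ x := by
        have := Matrix.dotProduct_star_self_pos_iff.mpr hx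
        simpa using this
      simp only [smul_mulVec, one_mulVec, dotProduct_smul, smul_eq_mul, star_trivial]
      exact mul_pos hσ hxx
  have hM : M.PosDef := hsm.add_posSemidef hPSD
  have hMt : Mᵀ = M := by
    rw [← conjTranspose_eq_transpose_of_trivial]; exact hM.1
  have hMinv : M * M⁻¹ = 1 := Matrix.mul_nonsing_inv M hM.det_pos.ne'.isUnit
  set u : Fin n → ℝ := M⁻¹ *ᵥ y with hu
  have hMu : M *ᵥ u = y := by
    rw [hu, mulVec_mulVec, hMinv, one_mulVec]
  set a : ℝ := y ⬝ᵥ (M⁻¹ *ᵥ y) with ha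
  have haa : a = u ⬝ᵥ (M *ᵥ u) := by
    rw [hMu, ha, hu, dotProduct_comm]
  have hsym : ∀ p q : Fin n → ℝ, p ⬝ᵥ (M *ᵥ q) = q ⬝ᵥ (M *ᵥ p) := by
    intro p q
    rw [dotProduct_mulVec p M q, ← mulVec_transpose, hMt, dotProduct_comm]
  have ha0 : 0 ≤ a := by
    have := hM.posSemidef.dotProduct_mulVec_nonneg u
    rw [haa]
    simpa using this
  -- first inequality : σ2 * a ≤ y ⬝ᵥ y
  have hyy : 0 ≤ y ⬝ᵥ y := by
    have := dotProduct_star_self_nonneg y; simpa using this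
  have huu : 0 ≤ u ⬝ᵥ u := by
    have := dotProduct_star_self_nonneg u; simpa using this
  have hlow : σ2 * (u ⬝ᵥ u) ≤ u ⬝ᵥ (M *ᵥ u) := by
    rw [hMdef, add_mulVec, dotProduct_add, smul_mulVec, one_mulVec, dotProduct_smul,
      smul_eq_mul]
    have := hPSD.dotProduct_mulVec_nonneg u
    simp only [star_trivial] at this
    linarith
  have hCS : (y ⬝ᵥ u)^2 ≤ (y ⬝ᵥ y) * (u ⬝ᵥ u) := by
    have := Finset.sum_mul_sq_le_sq_mul_sq Finset.univ y u
    simpa [dotProduct, pow_two] using this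
  have hyu : y ⬝ᵥ u = a := by rw [ha, hu]
  have hfirst : σ2 * a ≤ y ⬝ᵥ y := by
    rcases eq_or_lt_of_le ha0 with h | h
    · nlinarith
    · have h1 : a^2 ≤ (y ⬝ᵥ y) * (u ⬝ᵥ u) := by rw [← hyu]; exact hCS
      nlinarith [haa, hlow]
  -- second inequality
  obtain ⟨hPt, hPP, hPK⟩ := proj_props K
  set P : Matrix (Fin n) (Fin n) ℝ := K * moorePenrose (Kᵀ * K) * Kᵀ with hPdef
  set z : Fin n → ℝ := ((1 : Matrix (Fin n) (Fin n) ℝ) - P) *ᵥ y with hz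
  set q : ℝ := y ⬝ᵥ (((1 : Matrix (Fin n) (Fin n) ℝ) - P) *ᵥ y) with hq
  have hIP : ((1 : Matrix (Fin n) (Fin n) ℝ) - P)ᵀ = 1 - P := by
    rw [transpose_sub, transpose_one, hPt]
  have hIP2 : ((1 : Matrix (Fin n) (Fin n) ℝ) - P) * (1 - P) = 1 - P := by
    simp only [Matrix.mul_sub, Matrix.sub_mul, Matrix.one_mul, Matrix.mul_one, hPP]
    abel
  have hzz : z ⬝ᵥ z = q := by
    rw [hq, hz, dotProduct_mulVec, ← mulVec_transpose, hIP, mulVec_mulVec, hIP2,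
      dotProduct_comm]
  have hq0 : 0 ≤ q := by
    rw [← hzz]
    have := dotProduct_star_self_nonneg z; simpa using this
  have hKz : Kᵀ *ᵥ z = 0 := by
    have hKtP : Kᵀ * ((1 : Matrix (Fin n) (Fin n) ℝ) - P) = 0 := by
      have h1 : Kᵀ * P = Kᵀ := by
        have := congrArg Matrix.transpose hPK
        rwa [transpose_mul, hPt] at this
      rw [Matrix.mul_sub, Matrix.mul_one, h1, sub_self]
    rw [hz, mulVec_mulVec, hKtP, zero_mulVec]
  have hMz : M *ᵥ z = σ2 • z := by
    rw [hMdef, add_mulVec, smul_mulVec, one_mulVec]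
    have : (K * (Matrix.diagonal l)⁻¹ * Kᵀ) *ᵥ z = 0 := by
      rw [← mulVec_mulVec, hKz, mulVec_zero]
    rw [this, add_zero]
  have huMz : u ⬝ᵥ (M *ᵥ z) = q := by
    rw [hsym u z, hMu, dotProduct_comm, hq, hz]
  have hzMz : z ⬝ᵥ (M *ᵥ z) = σ2 * q := by
    rw [hMz, dotProduct_smul, smul_eq_mul, hzz]
  have hCS2 : q^2 ≤ a * (σ2 * q) := by
    have := psd_CS hM.posSemidef u z
    rwa [huMz, ← haa, hzMz] at this
  have hsecond : q ≤ σ2 * a := by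
    rcases eq_or_lt_of_le hq0 with h | h
    · nlinarith
    · nlinarith
  constructor
  · rw [Real.exp_le_exp, div_le_iff₀ (by positivity : (0:ℝ) < 2 * σ2)]
    nlinarith [hfirst]
  · rw [Real.exp_le_exp, le_div_iff₀ (by positivity : (0:ℝ) < 2 * σ2)]
    nlinarith [hsecond]
end

section
/- Let y ∈ ℝⁿ, σ² > 0, K an n × (n+1) matrix with largest eigenvalue e_max of KᵀK satisfying e_max > 0, and define for λ = (λ₀,…,λₙ) ∈ (0,∞)^{n+1}, D = diag(λ). If a ∉ (-1/2, 0), then ∫_{(0,∞)^{n+1}} (∏ᵢ λᵢ^{1/2}) det(KᵀK + σ²D)^{-1/2} exp(-½ yᵀ(σ²I + KD⁻¹Kᵀ)⁻¹ y) ∏ᵢ λᵢ^{a-1} dλ = ∞. -/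
open Matrix MeasureTheory Set

section LA
variable {ι : Type*} [Fintype ι] [DecidableEq ι]

/-- Congruence computation: det of PSD A dominated by diagonal d with diagonal d - A PSD. -/
lemma aux_det_le {A : Matrix ι ι ℝ} (hA : A.PosSemidef) {d : ι → ℝ}
    (hd : ∀ i, 0 < d i) (h : (Matrix.diagonal d - A).PosSemidef) :
    A.det ≤ ∏ i, d i := by
  set c : ι → ℝ := fun i => (Real.sqrt (d i))⁻¹ with hc
  have hc_pos : ∀ i, 0 < c i := fun i => inv_pos.2 (Real.sqrt_pos.2 (hd i))
  set C : Matrix ι ι ℝ := Matrix.diagonal c with hC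
  have hCH : Cᴴ = C := by
    rw [hC, Matrix.diagonal_conjTranspose]
    simp
  have hNpsd : (C * A * C).PosSemidef := by
    have := hA.mul_mul_conjTranspose_same C
    rwa [hCH] at this
  have key : ∀ i, c i * d i * c i = 1 := by
    intro i
    have h0 : Real.sqrt (d i) ≠ 0 := (Real.sqrt_pos.2 (hd i)).ne'
    have h1 := Real.mul_self_sqrt (hd i).le
    rw [hc]
    field_simp
    rw [Real.sq_sqrt (hd i).le]
  have hCdC : C * Matrix.diagonal d * C = 1 := by
    rw [hC, Matrix.diagonal_mul_diagonal, Matrix.diagonal_mul_diagonal]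
    have e : (fun i => c i * d i * c i) = fun _ => (1:ℝ) := funext fun i => key i
    rw [e]
    exact Matrix.diagonal_one
  have h1N : ((1 : Matrix ι ι ℝ) - C * A * C).PosSemidef := by
    have := h.mul_mul_conjTranspose_same C
    rw [hCH] at this
    have e : C * (Matrix.diagonal d - A) * C = 1 - C * A * C := by
      rw [Matrix.mul_sub, Matrix.sub_mul, hCdC]
    rwa [e] at this
  -- eigenvalues of N in [0,1]
  set N := C * A * C with hN
  have hdetN : N.det ≤ 1 := by
    have hev := hNpsd.isHermitian.det_eq_prod_eigenvalues
    rw [hev]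
    simp only [RCLike.ofReal_real_eq_id, id_eq]
    refine Finset.prod_le_one (fun i _ => hNpsd.eigenvalues_nonneg i) (fun i _ => ?_)
    -- show eigenvalue ≤ 1 using 1 - N PSD
    set v := ⇑(hNpsd.isHermitian.eigenvectorBasis i) with hv
    have hNv : N *ᵥ v = hNpsd.isHermitian.eigenvalues i • v :=
      hNpsd.isHermitian.mulVec_eigenvectorBasis i
    have hvv : v ⬝ᵥ v = 1 := by
      have hnorm := hNpsd.isHermitian.eigenvectorBasis.orthonormal.1 i
      have : (‖hNpsd.isHermitian.eigenvectorBasis i‖ : ℝ)^2 = v ⬝ᵥ v := by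
        rw [@norm_sq_eq_re_inner ℝ]
        simp only [RCLike.re_to_real, PiLp.inner_apply, dotProduct, hv, RCLike.inner_apply, conj_trivial]
      rw [hnorm] at this
      simpa using this.symm
    have h2 := h1N.dotProduct_mulVec_nonneg v
    rw [Matrix.sub_mulVec, Matrix.one_mulVec, hNv, dotProduct_sub,
      dotProduct_smul] at h2
    simp only [star_trivial, smul_eq_mul, hvv] at h2
    linarith
  have hdetC : C.det = ∏ i, c i := Matrix.det_diagonal
  have hdetN' : N.det = (∏ i, c i) * A.det * (∏ i, c i) := by
    rw [hN, Matrix.det_mul, Matrix.det_mul, hdetC]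
  have hprodc_pos : 0 < ∏ i, c i := Finset.prod_pos (fun i _ => hc_pos i)
  have hprodd_pos : 0 < ∏ i, d i := Finset.prod_pos (fun i _ => hd i)
  have hcd : (∏ i, c i) * (∏ i, c i) * (∏ i, d i) = 1 := by
    rw [← Finset.prod_mul_distrib, ← Finset.prod_mul_distrib]
    refine Finset.prod_eq_one (fun i _ => ?_)
    simpa [hc, mul_comm, mul_assoc, mul_left_comm] using key i
  nlinarith [hdetN, hdetN', hprodc_pos, hprodd_pos, hcd]

end LA

section LA2
variable {ι : Type*} [Fintype ι] [DecidableEq ι]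

lemma aux_shift_psd {G : Matrix ι ι ℝ} (hG : G.IsHermitian) {e : ℝ}
    (hub : ∀ μ ∈ spectrum ℝ G, μ ≤ e) :
    (e • (1 : Matrix ι ι ℝ) - G).PosSemidef := by
  set U : Matrix ι ι ℝ := ↑(hG.eigenvectorUnitary) with hU
  have hUU : U * star U = 1 := Matrix.mem_unitaryGroup_iff.mp hG.eigenvectorUnitary.2
  have hspec : G = U * Matrix.diagonal (RCLike.ofReal ∘ hG.eigenvalues) * star U :=
    hG.spectral_theorem
  have hdiag : Matrix.diagonal (RCLike.ofReal ∘ hG.eigenvalues)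
      = Matrix.diagonal hG.eigenvalues := by
    congr 1
  have key : e • (1 : Matrix ι ι ℝ) - G
      = U * Matrix.diagonal (fun i => e - hG.eigenvalues i) * star U := by
    have e1 : Matrix.diagonal (fun i => e - hG.eigenvalues i)
        = e • (1 : Matrix ι ι ℝ) - Matrix.diagonal hG.eigenvalues := by
      rw [Matrix.smul_one_eq_diagonal, Matrix.diagonal_sub]
    rw [e1, Matrix.mul_sub, Matrix.sub_mul, Matrix.mul_smul, Matrix.smul_mul,
      Matrix.mul_one, hUU, ← hdiag, ← hspec]
  rw [key]
  have hpsd : (Matrix.diagonal (fun i => e - hG.eigenvalues i)).PosSemidef :=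
    Matrix.posSemidef_diagonal_iff.mpr fun i =>
      sub_nonneg.2 (hub _ (hG.eigenvalues_mem_spectrum_real i))
  have h2 := hpsd.mul_mul_conjTranspose_same U
  rwa [← Matrix.star_eq_conjTranspose] at h2

lemma aux_quad (σ2 : ℝ) (hσ : 0 < σ2) {P : Matrix ι ι ℝ} (hP : P.PosSemidef) (y : ι → ℝ) :
    y ⬝ᵥ ((σ2 • (1 : Matrix ι ι ℝ) + P)⁻¹ *ᵥ y) ≤ σ2⁻¹ * (y ⬝ᵥ y) := by
  set M := σ2 • (1 : Matrix ι ι ℝ) + P with hM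
  have hMpd : M.PosDef := by
    have h1 : (σ2 • (1 : Matrix ι ι ℝ)).PosDef := by
      rw [Matrix.smul_one_eq_diagonal]
      exact Matrix.posDef_diagonal_iff.mpr fun _ => hσ
    exact h1.add_posSemidef hP
  set x := M⁻¹ *ᵥ y with hx
  have hMx : M *ᵥ x = y := by
    rw [hx, Matrix.mulVec_mulVec, Matrix.mul_nonsing_inv _ hMpd.det_pos.ne'.isUnit, Matrix.one_mulVec]
  have hyy : (0:ℝ) ≤ y ⬝ᵥ y := by
    simpa [dotProduct] using Finset.sum_nonneg fun i _ => mul_self_nonneg (y i)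
  have hxx : (0:ℝ) ≤ x ⬝ᵥ x := by
    simpa [dotProduct] using Finset.sum_nonneg fun i _ => mul_self_nonneg (x i)
  have hs : σ2 * (x ⬝ᵥ x) ≤ y ⬝ᵥ x := by
    have h2 := hP.dotProduct_mulVec_nonneg x
    simp only [star_trivial] at h2
    have : y ⬝ᵥ x = σ2 * (x ⬝ᵥ x) + x ⬝ᵥ (P *ᵥ x) := by
      have e1 : y ⬝ᵥ x = (M *ᵥ x) ⬝ᵥ x := by rw [hMx]
      have e2 : (M *ᵥ x) ⬝ᵥ x = x ⬝ᵥ (M *ᵥ x) := dotProduct_comm _ _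
      rw [e1, e2, hM, Matrix.add_mulVec, dotProduct_add, Matrix.smul_mulVec,
        Matrix.one_mulVec, dotProduct_smul, smul_eq_mul]
    linarith
  have hcs : (y ⬝ᵥ x)^2 ≤ (y ⬝ᵥ y) * (x ⬝ᵥ x) := by
    simpa [dotProduct, pow_two] using
      Finset.sum_mul_sq_le_sq_mul_sq Finset.univ y x
  have hyx : y ⬝ᵥ x ≤ σ2⁻¹ * (y ⬝ᵥ y) := by
    rcases le_or_gt (y ⬝ᵥ x) 0 with h | h
    · exact h.trans (by positivity)
    · have h1 : σ2 * (y ⬝ᵥ x)^2 ≤ (y ⬝ᵥ y) * (y ⬝ᵥ x) := by nlinarith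
      have h2 : σ2 * (y ⬝ᵥ x) ≤ y ⬝ᵥ y := by
        by_contra hcon
        push_neg at hcon
        nlinarith
      calc y ⬝ᵥ x = σ2⁻¹ * (σ2 * (y ⬝ᵥ x)) := by field_simp
        _ ≤ σ2⁻¹ * (y ⬝ᵥ y) := mul_le_mul_of_nonneg_left h2 (le_of_lt (inv_pos.2 hσ))
  exact hyx

end LA2

section LA3
variable {ι κ : Type*} [Fintype ι] [Fintype κ] [DecidableEq ι]

lemma aux_P_psd (K : Matrix κ ι ℝ) {l : ι → ℝ} (hl : ∀ i, 0 < l i) :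
    (K * (Matrix.diagonal l)⁻¹ * Kᵀ).PosSemidef := by
  have hinv : (Matrix.diagonal l)⁻¹ = Matrix.diagonal (fun i => (l i)⁻¹) := by
    refine Matrix.inv_eq_right_inv ?_
    rw [Matrix.diagonal_mul_diagonal]
    have e0 : (fun i => l i * (l i)⁻¹) = fun _ => (1:ℝ) :=
      funext fun i => mul_inv_cancel₀ (hl i).ne'
    rw [e0]
    exact Matrix.diagonal_one
  set B := K * Matrix.diagonal (fun i => Real.sqrt (l i)⁻¹) with hB
  have hBH : Bᴴ = Matrix.diagonal (fun i => Real.sqrt (l i)⁻¹) * Kᵀ := by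
    rw [hB, Matrix.conjTranspose_mul, Matrix.diagonal_conjTranspose,
      Matrix.conjTranspose_eq_transpose_of_trivial]
    congr 1
  have key : K * (Matrix.diagonal l)⁻¹ * Kᵀ = B * Bᴴ := by
    have e0 : (fun i => Real.sqrt (l i)⁻¹ * Real.sqrt (l i)⁻¹) = fun i => (l i)⁻¹ :=
      funext fun i => Real.mul_self_sqrt (inv_nonneg.2 (hl i).le)
    rw [hBH, hB, hinv, Matrix.mul_assoc, Matrix.mul_assoc, ← Matrix.mul_assoc
      (Matrix.diagonal _), Matrix.diagonal_mul_diagonal, e0]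
  rw [key]
  exact Matrix.posSemidef_self_mul_conjTranspose B

lemma aux_A_pd (K : Matrix κ ι ℝ) {σ2 : ℝ} (hσ : 0 < σ2) {l : ι → ℝ} (hl : ∀ i, 0 < l i) :
    (Kᵀ * K + σ2 • Matrix.diagonal l).PosDef := by
  have h1 : (Kᵀ * K).PosSemidef := by
    have := Matrix.posSemidef_conjTranspose_mul_self K
    rwa [Matrix.conjTranspose_eq_transpose_of_trivial] at this
  have h2 : (σ2 • Matrix.diagonal l).PosDef := by
    rw [← Matrix.diagonal_smul]
    exact Matrix.posDef_diagonal_iff.mpr fun i => by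
      simpa [smul_eq_mul] using mul_pos hσ (hl i)
  exact Matrix.PosDef.posSemidef_add h1 h2

end LA3

section PW
lemma aux_pointwise {n : ℕ} (y : Fin n → ℝ) (σ2 : ℝ) (hσ : 0 < σ2)
    (K : Matrix (Fin n) (Fin (n+1)) ℝ) (emax : ℝ)
    (hemax : IsGreatest (spectrum ℝ (Kᵀ * K)) emax) (hemax' : 0 < emax)
    (a : ℝ) (l : Fin (n+1) → ℝ) (hl : ∀ i, 0 < l i) :
    Real.exp (-(1/2) * (σ2⁻¹ * (y ⬝ᵥ y))) *
      ∏ i, ((l i) ^ ((1:ℝ)/2) * (emax + σ2 * l i) ^ (-(1/2) : ℝ) * (l i) ^ (a-1))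
    ≤ (∏ i, (l i) ^ ((1:ℝ)/2)) *
        ((Kᵀ * K + σ2 • Matrix.diagonal l).det) ^ (-(1/2) : ℝ) *
        Real.exp (-(1/2) * (y ⬝ᵥ
          ((σ2 • (1 : Matrix (Fin n) (Fin n) ℝ) + K * (Matrix.diagonal l)⁻¹ * Kᵀ)⁻¹ *ᵥ y))) *
        ∏ i, (l i) ^ (a - 1) := by
  have hApd : (Kᵀ * K + σ2 • Matrix.diagonal l).PosDef := aux_A_pd K hσ hl
  have hdetpos : 0 < (Kᵀ * K + σ2 • Matrix.diagonal l).det := hApd.det_pos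
  have hd : ∀ i, 0 < emax + σ2 * l i := fun i => add_pos hemax' (mul_pos hσ (hl i))
  have hdetle : (Kᵀ * K + σ2 • Matrix.diagonal l).det ≤ ∏ i, (emax + σ2 * l i) := by
    refine aux_det_le hApd.posSemidef hd ?_
    have e1 : Matrix.diagonal (fun i => emax + σ2 * l i)
        - (Kᵀ * K + σ2 • Matrix.diagonal l)
        = emax • (1 : Matrix (Fin (n+1)) (Fin (n+1)) ℝ) - Kᵀ * K := by
      have e2 : Matrix.diagonal (fun i => emax + σ2 * l i)
          = emax • (1 : Matrix (Fin (n+1)) (Fin (n+1)) ℝ) + σ2 • Matrix.diagonal l := by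
        rw [Matrix.smul_one_eq_diagonal, ← Matrix.diagonal_smul, ← Matrix.diagonal_add]
        congr 1
      rw [e2]
      abel
    rw [e1]
    have hKtK : (Kᵀ * K).PosSemidef := by
      have := Matrix.posSemidef_conjTranspose_mul_self K
      rwa [Matrix.conjTranspose_eq_transpose_of_trivial] at this
    exact aux_shift_psd hKtK.isHermitian (fun μ hμ => hemax.2 hμ)
  have hdet_rpow : ∏ i, (emax + σ2 * l i) ^ (-(1/2) : ℝ)
      ≤ ((Kᵀ * K + σ2 • Matrix.diagonal l).det) ^ (-(1/2) : ℝ) := by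
    rw [Real.finset_prod_rpow _ _ (fun i _ => (hd i).le)]
    exact Real.rpow_le_rpow_of_nonpos hdetpos hdetle (by norm_num)
  have hexp : Real.exp (-(1/2) * (σ2⁻¹ * (y ⬝ᵥ y)))
      ≤ Real.exp (-(1/2) * (y ⬝ᵥ
        ((σ2 • (1 : Matrix (Fin n) (Fin n) ℝ) + K * (Matrix.diagonal l)⁻¹ * Kᵀ)⁻¹ *ᵥ y))) := by
    refine Real.exp_le_exp.2 ?_
    have := aux_quad σ2 hσ (aux_P_psd K hl) y
    nlinarith [this]
  have hprod1 : (0:ℝ) ≤ ∏ i, (l i) ^ ((1:ℝ)/2) :=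
    Finset.prod_nonneg fun i _ => Real.rpow_nonneg (hl i).le _
  have hprod2 : (0:ℝ) ≤ ∏ i, (l i) ^ (a-1) :=
    Finset.prod_nonneg fun i _ => Real.rpow_nonneg (hl i).le _
  have hprodd : (0:ℝ) ≤ ∏ i, (emax + σ2 * l i) ^ (-(1/2) : ℝ) :=
    Finset.prod_nonneg fun i _ => Real.rpow_nonneg (hd i).le _
  set P1 : ℝ := ∏ i, (l i) ^ ((1:ℝ)/2) with hP1
  set P2 : ℝ := ∏ i, (l i) ^ (a-1) with hP2
  set Dl : ℝ := ∏ i, (emax + σ2 * l i) ^ (-(1/2) : ℝ) with hDl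
  set D : ℝ := ((Kᵀ * K + σ2 • Matrix.diagonal l).det) ^ (-(1/2) : ℝ) with hD
  set E0 : ℝ := Real.exp (-(1/2) * (σ2⁻¹ * (y ⬝ᵥ y))) with hE0
  set E : ℝ := Real.exp (-(1/2) * (y ⬝ᵥ
      ((σ2 • (1 : Matrix (Fin n) (Fin n) ℝ) + K * (Matrix.diagonal l)⁻¹ * Kᵀ)⁻¹ *ᵥ y))) with hE
  have hDnn : (0:ℝ) ≤ D := Real.rpow_nonneg hdetpos.le _
  have key : Dl * E0 ≤ D * E :=
    mul_le_mul hdet_rpow hexp (Real.exp_pos _).le hDnn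
  calc E0 * ∏ i, ((l i) ^ ((1:ℝ)/2) * (emax + σ2 * l i) ^ (-(1/2) : ℝ) * (l i) ^ (a-1))
      = P1 * (Dl * E0) * P2 := by
        rw [Finset.prod_mul_distrib, Finset.prod_mul_distrib, ← hP1, ← hP2, ← hDl]; ring
    _ ≤ P1 * (D * E) * P2 :=
        mul_le_mul_of_nonneg_right (mul_le_mul_of_nonneg_left key hprod1) hprod2
    _ = P1 * D * E * P2 := by ring
end PW

section ME
open scoped ENNReal

lemma aux_measure {m : ℕ} (hm : 0 < m) (f : (Fin m → ℝ) → ℝ≥0∞) (u : ℕ → ℝ) (ρ : ℕ → ℝ)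
    (hu : ∀ k, 0 < u k)
    (hdisj : ∀ j k : ℕ, j < k → 2 * u k ≤ u j ∨ 2 * u j ≤ u k)
    (hbound : ∀ (k : ℕ) (l : Fin m → ℝ), (∀ i, l i ∈ Ioo (u k) (2 * u k)) →
      ENNReal.ofReal (ρ k) ≤ f l)
    (ε : ℝ) (hε : 0 < ε)
    (hεle : ∀ k, ε ≤ ρ k * (u k) ^ m) :
    (∫⁻ l in univ.pi (fun _ : Fin m => Ioi (0:ℝ)), f l) = ⊤ := by
  set B : ℕ → Set (Fin m → ℝ) := fun k => univ.pi (fun _ => Ioo (u k) (2 * u k)) with hB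
  have hmeas : ∀ k, MeasurableSet (B k) := fun k =>
    MeasurableSet.univ_pi (fun _ => measurableSet_Ioo)
  have i0 : Fin m := ⟨0, hm⟩
  have hBmem : ∀ k (x : Fin m → ℝ), x ∈ B k → ∀ i, x i ∈ Ioo (u k) (2 * u k) := by
    intro k x hx i
    exact hx i (mem_univ i)
  have hdisjoint : Pairwise (Function.onFun Disjoint B) := by
    intro j k hjk
    have key : ∀ p q : ℕ, p < q → Disjoint (B p) (B q) := by
      intro p q hpq
      rw [Set.disjoint_left]
      intro x hxp hxq
      have h1 := hBmem p x hxp i0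
      have h2 := hBmem q x hxq i0
      rcases hdisj p q hpq with h | h
      · exact absurd (h2.2.trans_le (h.trans h1.1.le)) (lt_irrefl _)
      · exact absurd (h1.2.trans_le (h.trans h2.1.le)) (lt_irrefl _)
    rcases hjk.lt_or_gt with h | h
    · exact key _ _ h
    · exact (key _ _ h).symm
  have hsub : (⋃ k, B k) ⊆ univ.pi (fun _ : Fin m => Ioi (0:ℝ)) := by
    intro x hx
    rcases mem_iUnion.1 hx with ⟨k, hk⟩
    intro i _
    exact lt_trans (hu k) (hBmem k x hk i).1
  have hvol : ∀ k, volume (B k) = ENNReal.ofReal ((u k) ^ m) := by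
    intro k
    rw [hB]
    simp only [volume_pi_pi, Real.volume_Ioo]
    have : 2 * u k - u k = u k := by ring
    rw [this, Finset.prod_const, Finset.card_univ, Fintype.card_fin,
      ← ENNReal.ofReal_pow (hu k).le]
  have hperbox : ∀ k, ENNReal.ofReal ε ≤ ∫⁻ l in B k, f l := by
    intro k
    have hρnn : 0 ≤ ρ k := by
      by_contra hcon
      push_neg at hcon
      have := hεle k
      nlinarith [pow_pos (hu k) m, hε]
    calc ENNReal.ofReal ε ≤ ENNReal.ofReal (ρ k * (u k) ^ m) :=
          ENNReal.ofReal_le_ofReal (hεle k)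
      _ = ENNReal.ofReal (ρ k) * ENNReal.ofReal ((u k) ^ m) :=
          ENNReal.ofReal_mul hρnn
      _ = ENNReal.ofReal (ρ k) * volume (B k) := by rw [hvol k]
      _ = ∫⁻ _ in B k, ENNReal.ofReal (ρ k) := (setLIntegral_const _ _).symm
      _ ≤ ∫⁻ l in B k, f l :=
          setLIntegral_mono' (hmeas k) (fun x hx => hbound k x (hBmem k x hx))
  have htop : (⊤ : ℝ≥0∞) ≤ ∫⁻ l in univ.pi (fun _ : Fin m => Ioi (0:ℝ)), f l := by
    calc (⊤ : ℝ≥0∞) = ∑' _ : ℕ, ENNReal.ofReal ε :=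
          (ENNReal.tsum_const_eq_top_of_ne_zero (ENNReal.ofReal_pos.mpr hε).ne').symm
      _ ≤ ∑' k : ℕ, ∫⁻ l in B k, f l := ENNReal.tsum_le_tsum hperbox
      _ = ∫⁻ l in ⋃ k, B k, f l := (lintegral_iUnion hmeas hdisjoint f).symm
      _ ≤ ∫⁻ l in univ.pi (fun _ : Fin m => Ioi (0:ℝ)), f l := lintegral_mono_set hsub
  exact top_le_iff.mp htop

end ME

theorem stmt15 {n : ℕ} (y : Fin n → ℝ) (σ2 : ℝ) (hσ : 0 < σ2)
    (K : Matrix (Fin n) (Fin (n+1)) ℝ) (emax : ℝ)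
    (hemax : IsGreatest (spectrum ℝ (Kᵀ * K)) emax) (hemax' : 0 < emax)
    (a : ℝ) (ha : a ∉ Ioo (-1/2 : ℝ) 0) :
    (∫⁻ l in univ.pi (fun _ : Fin (n+1) => Ioi (0:ℝ)),
        ENNReal.ofReal ((∏ i, (l i) ^ ((1:ℝ)/2)) *
          ((Kᵀ * K + σ2 • Matrix.diagonal l).det) ^ (-(1/2) : ℝ) *
          Real.exp (-(1/2) * (y ⬝ᵥ
            ((σ2 • (1 : Matrix (Fin n) (Fin n) ℝ) + K * (Matrix.diagonal l)⁻¹ * Kᵀ)⁻¹ *ᵥ y))) *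
          ∏ i, (l i) ^ (a - 1))) = ⊤ := by
  set c₀ : ℝ := Real.exp (-(1/2) * (σ2⁻¹ * (y ⬝ᵥ y))) with hc₀def
  have hc₀ : 0 < c₀ := Real.exp_pos _
  set c₁ : ℝ := (emax + σ2) ^ (-(1/2) : ℝ) with hc₁def
  have hc₁ : 0 < c₁ := Real.rpow_pos_of_pos (by linarith) _
  set h : ℝ → ℝ := fun t =>
    t ^ ((1:ℝ)/2) * (emax + σ2 * t) ^ (-(1/2) : ℝ) * t ^ (a-1) with hhdef
  -- bridge: per-coordinate bound implies box bound on the integrand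
  have bridge : ∀ (r : ℝ), 0 ≤ r → ∀ (u : ℝ), 0 < u →
      (∀ t ∈ Ioo u (2*u), r ≤ h t) →
      ∀ l : Fin (n+1) → ℝ, (∀ i, l i ∈ Ioo u (2*u)) →
      ENNReal.ofReal (c₀ * r ^ (n+1)) ≤
        ENNReal.ofReal ((∏ i, (l i) ^ ((1:ℝ)/2)) *
          ((Kᵀ * K + σ2 • Matrix.diagonal l).det) ^ (-(1/2) : ℝ) *
          Real.exp (-(1/2) * (y ⬝ᵥ
            ((σ2 • (1 : Matrix (Fin n) (Fin n) ℝ) + K * (Matrix.diagonal l)⁻¹ * Kᵀ)⁻¹ *ᵥ y))) *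
          ∏ i, (l i) ^ (a - 1)) := by
    intro r hr u hu hcoord l hl
    refine ENNReal.ofReal_le_ofReal ?_
    have hlpos : ∀ i, 0 < l i := fun i => hu.trans (hl i).1
    have step1 : c₀ * r ^ (n+1) ≤ c₀ * ∏ i, h (l i) := by
      refine mul_le_mul_of_nonneg_left ?_ hc₀.le
      have : r ^ (n+1) = ∏ _i : Fin (n+1), r := by
        rw [Finset.prod_const, Finset.card_univ, Fintype.card_fin]
      rw [this]
      exact Finset.prod_le_prod (fun i _ => hr) (fun i _ => hcoord (l i) (hl i))
    refine step1.trans ?_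
    exact aux_pointwise y σ2 hσ K emax hemax hemax' a l hlpos
  rcases lt_or_ge a 0 with hneg | hpos
  · -- case a ≤ -1/2
    have ha' : a ≤ -(1/2 : ℝ) := by
      by_contra hcon
      push_neg at hcon
      exact ha ⟨by linarith, hneg⟩
    set u : ℕ → ℝ := fun k => (2:ℝ) ^ (-(k:ℝ) - 1) with hudef
    have hu : ∀ k, 0 < u k := fun k => Real.rpow_pos_of_pos two_pos _
    have h2u : ∀ k, 2 * u k = (2:ℝ) ^ (-(k:ℝ)) := by
      intro k
      rw [hudef]
      have : (2:ℝ) * 2 ^ (-(k:ℝ) - 1) = 2 ^ (1:ℝ) * 2 ^ (-(k:ℝ) - 1) := by norm_num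
      rw [this, ← Real.rpow_add two_pos]
      norm_num
    have h2u1 : ∀ k, 2 * u k ≤ 1 := by
      intro k
      rw [h2u]
      exact Real.rpow_le_one_of_one_le_of_nonpos one_le_two (by simp)
    set r : ℕ → ℝ := fun k => c₁ * ((u k) ^ ((1:ℝ)/2) * (2 * u k) ^ (a-1)) with hrdef
    have hrpos : ∀ k, 0 < r k := fun k => by positivity
    have claim : ∀ k, ∀ t ∈ Ioo (u k) (2 * u k), r k ≤ h t := by
      intro k t ht
      have ht0 : 0 < t := (hu k).trans ht.1
      have b1 : (u k) ^ ((1:ℝ)/2) ≤ t ^ ((1:ℝ)/2) :=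
        Real.rpow_le_rpow (hu k).le ht.1.le (by norm_num)
      have b2 : c₁ ≤ (emax + σ2 * t) ^ (-(1/2) : ℝ) := by
        rw [hc₁def]
        refine Real.rpow_le_rpow_of_nonpos (by positivity) ?_ (by norm_num)
        have ht1 : t ≤ 1 := ht.2.le.trans (h2u1 k)
        nlinarith
      have b3 : (2 * u k) ^ (a-1) ≤ t ^ (a-1) :=
        Real.rpow_le_rpow_of_nonpos ht0 ht.2.le (by linarith)
      calc r k = (u k) ^ ((1:ℝ)/2) * c₁ * (2 * u k) ^ (a-1) := by rw [hrdef]; ring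
        _ ≤ t ^ ((1:ℝ)/2) * (emax + σ2 * t) ^ (-(1/2) : ℝ) * t ^ (a-1) := by
            refine mul_le_mul (mul_le_mul b1 b2 hc₁.le (Real.rpow_nonneg ht0.le _)) b3
              (Real.rpow_nonneg (by positivity) _) (by positivity)
        _ = h t := rfl
    have hdisj : ∀ j k : ℕ, j < k → 2 * u k ≤ u j ∨ 2 * u j ≤ u k := by
      intro j k hjk
      left
      rw [h2u, hudef]
      refine Real.rpow_le_rpow_of_exponent_le one_le_two ?_
      have : (j:ℝ) + 1 ≤ (k:ℝ) := by exact_mod_cast Nat.succ_le_of_lt hjk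
      linarith
    have hεle : ∀ k, c₀ * (c₁ * (2:ℝ) ^ (-(3:ℝ)/2)) ^ (n+1)
        ≤ (c₀ * (r k) ^ (n+1)) * (u k) ^ (n+1) := by
      intro k
      have key : c₁ * (2:ℝ) ^ (-(3:ℝ)/2) ≤ r k * u k := by
        have e1 : r k * u k
            = c₁ * (2:ℝ) ^ ((-(k:ℝ) - 1) * ((1:ℝ)/2) + (-(k:ℝ)) * (a-1) + (-(k:ℝ) - 1)) := by
          have u1 : u k = (2:ℝ) ^ (-(k:ℝ) - 1) := rfl
          have r1 : r k = c₁ * ((u k) ^ ((1:ℝ)/2) * (2 * u k) ^ (a-1)) := rfl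
          rw [r1, h2u k, u1,
            ← Real.rpow_mul (by norm_num : (0:ℝ) ≤ 2),
            ← Real.rpow_mul (by norm_num : (0:ℝ) ≤ 2),
            mul_assoc c₁, mul_assoc, ← Real.rpow_add two_pos, ← Real.rpow_add two_pos]
          congr 1
          ring_nf
        rw [e1]
        refine mul_le_mul_of_nonneg_left ?_ hc₁.le
        refine Real.rpow_le_rpow_of_exponent_le one_le_two ?_
        have hk : (0:ℝ) ≤ (k:ℝ) := Nat.cast_nonneg k
        nlinarith
      calc c₀ * (c₁ * (2:ℝ) ^ (-(3:ℝ)/2)) ^ (n+1) ≤ c₀ * (r k * u k) ^ (n+1) := by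
            refine mul_le_mul_of_nonneg_left (pow_le_pow_left₀ (by positivity) key _) hc₀.le
        _ = (c₀ * (r k) ^ (n+1)) * (u k) ^ (n+1) := by rw [mul_pow]; ring
    exact aux_measure (Nat.succ_pos n) _ u (fun k => c₀ * (r k) ^ (n+1)) hu hdisj
      (fun k l hl => bridge (r k) (hrpos k).le (u k) (hu k) (claim k) l hl)
      (c₀ * (c₁ * (2:ℝ) ^ (-(3:ℝ)/2)) ^ (n+1)) (by positivity) hεle
  · -- case 0 ≤ a
    set u : ℕ → ℝ := fun k => (2:ℝ) ^ (k:ℝ) with hudef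
    have hu : ∀ k, 0 < u k := fun k => Real.rpow_pos_of_pos two_pos _
    have hu1 : ∀ k, 1 ≤ u k := fun k => Real.one_le_rpow one_le_two (Nat.cast_nonneg k)
    set r : ℕ → ℝ := fun k => c₁ * ((u k) ^ a * (2 * u k)⁻¹) with hrdef
    have hrpos : ∀ k, 0 < r k := fun k => by
      have := hu k
      positivity
    have claim : ∀ k, ∀ t ∈ Ioo (u k) (2 * u k), r k ≤ h t := by
      intro k t ht
      have ht0 : 0 < t := (hu k).trans ht.1
      have ht1 : 1 ≤ t := (hu1 k).trans ht.1.le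
      have hbase : emax + σ2 * t ≤ (emax + σ2) * t := by nlinarith
      have e1 : ((emax + σ2) * t) ^ (-(1/2):ℝ) ≤ (emax + σ2 * t) ^ (-(1/2):ℝ) :=
        Real.rpow_le_rpow_of_nonpos (by positivity) hbase (by norm_num)
      have e2 : ((emax + σ2) * t) ^ (-(1/2):ℝ) = c₁ * t ^ (-(1/2):ℝ) := by
        rw [hc₁def, Real.mul_rpow (by positivity) ht0.le]
      have e3 : t ^ ((1:ℝ)/2) * (c₁ * t ^ (-(1/2):ℝ)) = c₁ := by
        rw [mul_comm c₁, ← mul_assoc, ← Real.rpow_add ht0]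
        norm_num
      have e4 : (u k) ^ a * (2 * u k)⁻¹ ≤ t ^ (a-1) := by
        have e5 : t ^ (a-1) = t ^ a * t⁻¹ := by
          rw [← Real.rpow_neg_one t, ← Real.rpow_add ht0]
          congr 1
        rw [e5]
        have h4a : (u k) ^ a ≤ t ^ a := Real.rpow_le_rpow (hu k).le ht.1.le hpos
        have h4b : (2 * u k)⁻¹ ≤ t⁻¹ := by
          refine inv_anti₀ ht0 ht.2.le
        exact mul_le_mul h4a h4b (by positivity) (Real.rpow_nonneg ht0.le a)
      calc r k = (t ^ ((1:ℝ)/2) * (c₁ * t ^ (-(1/2):ℝ))) * ((u k) ^ a * (2 * u k)⁻¹) := by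
            rw [e3]
        _ ≤ (t ^ ((1:ℝ)/2) * (emax + σ2 * t) ^ (-(1/2):ℝ)) * t ^ (a-1) := by
            have g1 : (0:ℝ) ≤ (u k) ^ a * (2 * u k)⁻¹ :=
              mul_nonneg (Real.rpow_nonneg (hu k).le a)
                (inv_nonneg.2 (by linarith [hu k]))
            have g2 : (0:ℝ) ≤ t ^ ((1:ℝ)/2) * (emax + σ2 * t) ^ (-(1/2):ℝ) :=
              mul_nonneg (Real.rpow_nonneg ht0.le _)
                (Real.rpow_nonneg (by nlinarith) _)
            exact mul_le_mul (mul_le_mul_of_nonneg_left (e2 ▸ e1)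
              (Real.rpow_nonneg ht0.le _)) e4 g1 g2
        _ = h t := by rw [hhdef]
    have hdisj : ∀ j k : ℕ, j < k → 2 * u k ≤ u j ∨ 2 * u j ≤ u k := by
      intro j k hjk
      right
      have e0 : 2 * u j = (2:ℝ) ^ ((j:ℝ) + 1) := by
        rw [hudef]
        have : (2:ℝ) * 2 ^ ((j:ℝ)) = 2 ^ (1:ℝ) * 2 ^ ((j:ℝ)) := by norm_num
        rw [this, ← Real.rpow_add two_pos]
        ring_nf
      rw [e0, hudef]
      refine Real.rpow_le_rpow_of_exponent_le one_le_two ?_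
      exact_mod_cast Nat.succ_le_of_lt hjk
    have hεle : ∀ k, c₀ * (c₁ / 2) ^ (n+1)
        ≤ (c₀ * (r k) ^ (n+1)) * (u k) ^ (n+1) := by
      intro k
      have key : c₁ / 2 ≤ r k * u k := by
        have e1 : r k * u k = c₁ * (u k) ^ a / 2 := by
          rw [hrdef]
          field_simp [(hu k).ne']
        rw [e1]
        have h1 : (1:ℝ) ≤ (u k) ^ a := Real.one_le_rpow (hu1 k) hpos
        nlinarith
      calc c₀ * (c₁ / 2) ^ (n+1) ≤ c₀ * (r k * u k) ^ (n+1) := by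
            refine mul_le_mul_of_nonneg_left (pow_le_pow_left₀ (by positivity) key _) hc₀.le
        _ = (c₀ * (r k) ^ (n+1)) * (u k) ^ (n+1) := by rw [mul_pow]; ring
    exact aux_measure (Nat.succ_pos n) _ u (fun k => c₀ * (r k) ^ (n+1)) hu hdisj
      (fun k l hl => bridge (r k) (hrpos k).le (u k) (hu k) (claim k) l hl)
      (c₀ * (c₁ / 2) ^ (n+1)) (by positivity) hεle
end

section
/- Let z ∈ ℝⁿ, σ² > 0, K an n × (n+1) matrix with e_max the largest eigenvalue of KᵀK, e_max > 0, and D = diag(λ₀,…,λₙ), λᵢ > 0. Then ∫_{(0,∞)^{n+1}} (∏ᵢ λᵢ^{1/2}) det(KᵀK + D)^{-1/2} exp(-(1/(2σ²)) zᵀ(I + KD⁻¹Kᵀ)⁻¹ z) ∏ᵢ λᵢ⁻¹ dλ = ∞. -/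
open Matrix MeasureTheory Set


lemma lint_inv_top : (∫⁻ x in Ici (1:ℝ), ENNReal.ofReal x⁻¹) = ⊤ := by
  have h1 : (∫⁻ x in Ioi (1:ℝ), ENNReal.ofReal x⁻¹) = ⊤ := by
    by_contra h
    have hlt : (∫⁻ x in Ioi (1:ℝ), ENNReal.ofReal x⁻¹) < ⊤ := lt_top_iff_ne_top.2 h
    have : IntegrableOn (fun x : ℝ => x⁻¹) (Ioi 1) := by
      refine ⟨measurable_inv.aestronglyMeasurable, ?_⟩
      rw [hasFiniteIntegral_iff_norm]
      have : ∀ᵐ x ∂(volume.restrict (Ioi (1:ℝ))),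
          ENNReal.ofReal ‖x⁻¹‖ = ENNReal.ofReal x⁻¹ := by
        filter_upwards [ae_restrict_mem measurableSet_Ioi] with x hx
        rw [Real.norm_eq_abs, abs_of_nonneg (inv_nonneg.2 (zero_le_one.trans hx.le))]
      rwa [lintegral_congr_ae this]
    exact not_IntegrableOn_Ioi_inv this
  refine top_le_iff.1 ?_
  rw [← h1]
  exact lintegral_mono_set Ioi_subset_Ici_self

lemma det_le_bound {m : ℕ} (M : Matrix (Fin m) (Fin m) ℝ) (b : Fin m → ℝ)
    (hb : ∀ j i, |M j i| ≤ b i) : M.det ≤ (Nat.factorial m) * ∏ i, b i := by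
  rw [Matrix.det_apply']
  have hbd : ∀ σ : Equiv.Perm (Fin m),
      ((Equiv.Perm.sign σ : ℤ) : ℝ) * (∏ i, M (σ i) i) ≤ ∏ i, b i := by
    intro σ
    calc ((Equiv.Perm.sign σ : ℤ) : ℝ) * (∏ i, M (σ i) i)
        ≤ |((Equiv.Perm.sign σ : ℤ) : ℝ) * (∏ i, M (σ i) i)| := le_abs_self _
      _ = |∏ i, M (σ i) i| := by
          rcases Int.units_eq_one_or (Equiv.Perm.sign σ) with h | h <;>
            simp [h, abs_neg]
      _ = ∏ i, |M (σ i) i| := Finset.abs_prod _ _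
      _ ≤ ∏ i, b i := Finset.prod_le_prod (fun i _ => abs_nonneg _)
          (fun i _ => hb (σ i) i)
  calc (∑ σ : Equiv.Perm (Fin m), ((Equiv.Perm.sign σ : ℤ) : ℝ) * (∏ i, M (σ i) i))
      ≤ ∑ σ : Equiv.Perm (Fin m), ∏ i, b i := Finset.sum_le_sum fun σ _ => hbd σ
    _ = (Nat.factorial m) * ∏ i, b i := by
        rw [Finset.sum_const, nsmul_eq_mul]
        simp [Fintype.card_perm]


lemma quad_bound {n : ℕ} (K : Matrix (Fin n) (Fin (n+1)) ℝ) (z : Fin n → ℝ)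
    (l : Fin (n+1) → ℝ) (hl : ∀ i, 0 < l i) :
    z ⬝ᵥ (((1 : Matrix (Fin n) (Fin n) ℝ) + K * (Matrix.diagonal l)⁻¹ * Kᵀ)⁻¹ *ᵥ z)
      ≤ z ⬝ᵥ z := by
  have hdiag : (Matrix.diagonal l)⁻¹ = Matrix.diagonal (fun i => (l i)⁻¹) := by
    apply Matrix.inv_eq_right_inv
    rw [Matrix.diagonal_mul_diagonal]
    have h0 : (fun i => l i * (l i)⁻¹) = fun _ => (1:ℝ) :=
      funext fun i => mul_inv_cancel₀ (hl i).ne'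
    rw [h0, Matrix.diagonal_one]
  set B : Matrix (Fin n) (Fin n) ℝ := K * (Matrix.diagonal l)⁻¹ * Kᵀ with hB
  have hBpsd : B.PosSemidef := by
    rw [hB, hdiag]
    have h1 : (Matrix.diagonal (fun i => (l i)⁻¹)).PosSemidef :=
      Matrix.PosSemidef.diagonal (fun i => inv_nonneg.2 (hl i).le)
    have := h1.mul_mul_conjTranspose_same K
    simpa using this
  set A : Matrix (Fin n) (Fin n) ℝ := 1 + B with hA
  have hApos : A.PosDef := Matrix.PosDef.add_posSemidef Matrix.PosDef.one hBpsd
  have hdet : A.det ≠ 0 := hApos.det_pos.ne'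
  have hAinv : A * A⁻¹ = 1 := Matrix.mul_nonsing_inv A (isUnit_iff_ne_zero.2 hdet)
  set w : Fin n → ℝ := A⁻¹ *ᵥ z with hw
  have hz : A *ᵥ w = z := by
    rw [hw, Matrix.mulVec_mulVec, hAinv, Matrix.one_mulVec]
  have hBw : 0 ≤ w ⬝ᵥ (B *ᵥ w) := by
    have := hBpsd.dotProduct_mulVec_nonneg w
    simpa using this
  have hself : 0 ≤ (B *ᵥ w) ⬝ᵥ (B *ᵥ w) := by
    simp only [dotProduct]
    exact Finset.sum_nonneg fun i _ => mul_self_nonneg _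
  have hcomm : (B *ᵥ w) ⬝ᵥ w = w ⬝ᵥ (B *ᵥ w) := dotProduct_comm _ _
  calc z ⬝ᵥ (A⁻¹ *ᵥ z) = (A *ᵥ w) ⬝ᵥ w := by rw [hz, hw]
    _ ≤ (A *ᵥ w) ⬝ᵥ (A *ᵥ w) := by
        simp only [hA, Matrix.add_mulVec, Matrix.one_mulVec, add_dotProduct,
          dotProduct_add]
        linarith [hBw, hself, hcomm]
    _ = z ⬝ᵥ z := by rw [hz]

set_option maxHeartbeats 1000000 in
theorem stmt18 {n : ℕ} (z : Fin n → ℝ) (σ2 : ℝ) (hσ : 0 < σ2)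
    (K : Matrix (Fin n) (Fin (n+1)) ℝ) (emax : ℝ)
    (hemax : IsGreatest (spectrum ℝ (Kᵀ * K)) emax) (hemax' : 0 < emax) :
    (∫⁻ l in univ.pi (fun _ : Fin (n+1) => Ioi (0:ℝ)),
        ENNReal.ofReal ((∏ i, (l i) ^ ((1:ℝ)/2)) *
          ((Kᵀ * K + Matrix.diagonal l).det) ^ (-(1/2) : ℝ) *
          Real.exp (-(1/(2*σ2)) * (z ⬝ᵥ
            (((1 : Matrix (Fin n) (Fin n) ℝ) + K * (Matrix.diagonal l)⁻¹ * Kᵀ)⁻¹ *ᵥ z))) *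
          ∏ i, (l i)⁻¹)) = ⊤ := by
  classical
  -- constants
  have hC0' : (0:ℝ) ≤ ∑ j : Fin (n+1), ∑ i : Fin (n+1), |(Kᵀ * K) j i| :=
    Finset.sum_nonneg fun j _ => Finset.sum_nonneg fun i _ => abs_nonneg _
  have hCentry' : ∀ j i, |(Kᵀ * K) j i| ≤ ∑ j' : Fin (n+1), ∑ i' : Fin (n+1), |(Kᵀ * K) j' i'| := by
    intro j i
    calc |(Kᵀ * K) j i| ≤ ∑ i' : Fin (n+1), |(Kᵀ * K) j i'| :=
          Finset.single_le_sum (f := fun i' => |(Kᵀ * K) j i'|)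
            (fun i' _ => abs_nonneg _) (Finset.mem_univ i)
      _ ≤ ∑ j' : Fin (n+1), ∑ i' : Fin (n+1), |(Kᵀ * K) j' i'| :=
          Finset.single_le_sum (f := fun j' => ∑ i' : Fin (n+1), |(Kᵀ * K) j' i'|)
            (fun j' _ => Finset.sum_nonneg fun i' _ => abs_nonneg _) (Finset.mem_univ j)
  set C : ℝ := ∑ j : Fin (n+1), ∑ i : Fin (n+1), |(Kᵀ * K) j i| with hCdef
  have hC0 : 0 ≤ C := hC0'
  have hCentry : ∀ j i, |(Kᵀ * K) j i| ≤ C := hCentry'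
  set A : ℝ := (Nat.factorial (n+1) : ℝ) * (C+1)^(n+1) with hAdef
  have hApos : 0 < A := by positivity
  set exp0 : ℝ := Real.exp (-(1/(2*σ2)) * (z ⬝ᵥ z)) with hexp0def
  set c : ℝ := A ^ (-(1/2):ℝ) * exp0 * (1/2:ℝ)^n with hcdef
  have hc : 0 < c := by
    have : 0 < exp0 := Real.exp_pos _
    positivity
  -- the set
  set e := MeasurableEquiv.piFinSuccAbove (fun _ : Fin (n+1) => ℝ) 0 with hedef
  set S2 : Set (Fin n → ℝ) := univ.pi (fun _ : Fin n => Icc (1:ℝ) 2) with hS2def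
  set T : Set (Fin (n+1) → ℝ) := e ⁻¹' ((Ici (1:ℝ)) ×ˢ S2) with hTdef
  have hmemT : ∀ l ∈ T, (1 ≤ l 0) ∧ ∀ j : Fin n, l j.succ ∈ Icc (1:ℝ) 2 := by
    intro l hl
    rw [hTdef, Set.mem_preimage, Set.mem_prod] at hl
    obtain ⟨h1, h2⟩ := hl
    rw [hS2def, Set.mem_pi] at h2
    refine ⟨h1, fun j => ?_⟩
    have := h2 j (Set.mem_univ j)
    simpa [hedef, MeasurableEquiv.piFinSuccAbove, Fin.tail] using this
  have hl1 : ∀ l ∈ T, ∀ i, 1 ≤ l i := by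
    intro l hl i
    obtain ⟨h1, h2⟩ := hmemT l hl
    induction i using Fin.cases with
    | zero => exact h1
    | succ j => exact (h2 j).1
  have hl0 : ∀ l ∈ T, ∀ i, 0 < l i := fun l hl i =>
    lt_of_lt_of_le zero_lt_one (hl1 l hl i)
  have hTsub : T ⊆ univ.pi (fun _ : Fin (n+1) => Ioi (0:ℝ)) := by
    intro l hl
    rw [Set.mem_pi]
    exact fun i _ => hl0 l hl i
  -- pointwise bound
  have hpt : ∀ l ∈ T, c * (l 0)⁻¹ ≤
      (∏ i, (l i) ^ ((1:ℝ)/2)) *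
        ((Kᵀ * K + Matrix.diagonal l).det) ^ (-(1/2) : ℝ) *
        Real.exp (-(1/(2*σ2)) * (z ⬝ᵥ
          (((1 : Matrix (Fin n) (Fin n) ℝ) + K * (Matrix.diagonal l)⁻¹ * Kᵀ)⁻¹ *ᵥ z))) *
        ∏ i, (l i)⁻¹ := by
    intro l hlT
    have h1l := hl1 l hlT
    have h0l := hl0 l hlT
    have h2l : ∀ j : Fin n, l j.succ ≤ 2 := fun j => ((hmemT l hlT).2 j).2
    set P : ℝ := ∏ i, l i with hPdef
    have hP : 0 < P := Finset.prod_pos fun i _ => h0l i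
    -- determinant bounds
    have hdet_le : (Kᵀ * K + Matrix.diagonal l).det ≤ A * P := by
      have hb : ∀ j i, |(Kᵀ * K + Matrix.diagonal l) j i| ≤ C + l i := by
        intro j i
        have : |(Kᵀ * K + Matrix.diagonal l) j i| ≤
            |(Kᵀ * K) j i| + |Matrix.diagonal l j i| := by
          rw [Matrix.add_apply]; exact abs_add_le _ _
        refine this.trans (add_le_add (hCentry j i) ?_)
        rcases eq_or_ne j i with h | h
        · subst h; rw [Matrix.diagonal_apply_eq, abs_of_nonneg (h0l j).le]
        · rw [Matrix.diagonal_apply_ne _ h, abs_zero]; exact (h0l i).le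
      have h1 := det_le_bound (Kᵀ * K + Matrix.diagonal l) (fun i => C + l i) hb
      have h2 : (∏ i, (C + l i)) ≤ (C+1)^(n+1) * P := by
        have : (∏ i, (C + l i)) ≤ ∏ i, ((C+1) * l i) := by
          refine Finset.prod_le_prod (fun i _ => add_nonneg hC0 (h0l i).le) (fun i _ => ?_)
          nlinarith [h1l i, hC0]
        refine this.trans_eq ?_
        rw [Finset.prod_mul_distrib, Finset.prod_const, hPdef]
        simp
      calc (Kᵀ * K + Matrix.diagonal l).det
          ≤ (Nat.factorial (n+1) : ℝ) * ∏ i, (C + l i) := h1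
        _ ≤ (Nat.factorial (n+1) : ℝ) * ((C+1)^(n+1) * P) := by
            refine mul_le_mul_of_nonneg_left h2 (by positivity)
        _ = A * P := by rw [hAdef]; ring
    have hdetpos : 0 < (Kᵀ * K + Matrix.diagonal l).det := by
      have hKK : (Kᵀ * K).PosSemidef := by
        simpa using Matrix.posSemidef_conjTranspose_mul_self K
      have hdg : (Matrix.diagonal l).PosDef :=
        Matrix.posDef_diagonal_iff.mpr fun i => h0l i
      exact (Matrix.PosDef.posSemidef_add hKK hdg).det_pos
    -- rpow bounds
    have m1 : A ^ (-(1/2):ℝ) * P ^ (-(1/2):ℝ) ≤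
        ((Kᵀ * K + Matrix.diagonal l).det) ^ (-(1/2) : ℝ) := by
      rw [← Real.mul_rpow hApos.le hP.le]
      exact Real.rpow_le_rpow_of_nonpos hdetpos hdet_le (by norm_num)
    have h4 : ∏ i, (l i) ^ ((1:ℝ)/2) = P ^ ((1:ℝ)/2) := by
      rw [hPdef]
      exact Real.finset_prod_rpow _ _ (fun i _ => (h0l i).le) _
    have h5 : P ^ ((1:ℝ)/2) * P ^ (-(1/2):ℝ) = 1 := by
      rw [← Real.rpow_add hP]; norm_num
    -- exp bound
    have m2 : exp0 ≤ Real.exp (-(1/(2*σ2)) * (z ⬝ᵥ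
        (((1 : Matrix (Fin n) (Fin n) ℝ) + K * (Matrix.diagonal l)⁻¹ * Kᵀ)⁻¹ *ᵥ z))) := by
      rw [hexp0def]
      apply Real.exp_le_exp.mpr
      apply mul_le_mul_of_nonpos_left (quad_bound K z l h0l)
      have : 0 < 1/(2*σ2) := by positivity
      linarith
    -- product of inverses bound
    have m3 : (1/2:ℝ)^n * (l 0)⁻¹ ≤ ∏ i, (l i)⁻¹ := by
      rw [Fin.prod_univ_succ]
      have hhalf : (1/2:ℝ)^n ≤ ∏ j : Fin n, (l j.succ)⁻¹ := by
        calc (1/2:ℝ)^n = ∏ _j : Fin n, (1/2:ℝ) := by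
              rw [Finset.prod_const]; simp
          _ ≤ ∏ j : Fin n, (l j.succ)⁻¹ := by
              refine Finset.prod_le_prod (fun _ _ => by norm_num) (fun j _ => ?_)
              rw [one_div]
              exact inv_anti₀ (h0l j.succ) (h2l j)
      calc (1/2:ℝ)^n * (l 0)⁻¹ ≤ (∏ j : Fin n, (l j.succ)⁻¹) * (l 0)⁻¹ :=
            mul_le_mul_of_nonneg_right hhalf (inv_nonneg.2 (h0l 0).le)
        _ = (l 0)⁻¹ * ∏ j : Fin n, (l j.succ)⁻¹ := mul_comm _ _
    -- nonnegativity
    have n1 : (0:ℝ) ≤ P ^ ((1:ℝ)/2) := Real.rpow_nonneg hP.le _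
    have n2 : (0:ℝ) ≤ A ^ (-(1/2):ℝ) * P ^ (-(1/2):ℝ) :=
      mul_nonneg (Real.rpow_nonneg hApos.le _) (Real.rpow_nonneg hP.le _)
    have n3 : (0:ℝ) ≤ exp0 := (Real.exp_pos _).le
    have n4 : (0:ℝ) ≤ (1/2:ℝ)^n * (l 0)⁻¹ :=
      mul_nonneg (by positivity) (inv_nonneg.2 (h0l 0).le)
    have n5 : (0:ℝ) ≤ ((Kᵀ * K + Matrix.diagonal l).det) ^ (-(1/2) : ℝ) :=
      Real.rpow_nonneg hdetpos.le _
    have n6 : (0:ℝ) ≤ Real.exp (-(1/(2*σ2)) * (z ⬝ᵥ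
        (((1 : Matrix (Fin n) (Fin n) ℝ) + K * (Matrix.diagonal l)⁻¹ * Kᵀ)⁻¹ *ᵥ z))) :=
      (Real.exp_pos _).le
    calc c * (l 0)⁻¹
        = P ^ ((1:ℝ)/2) * (A ^ (-(1/2):ℝ) * P ^ (-(1/2):ℝ)) * exp0 *
            ((1/2:ℝ)^n * (l 0)⁻¹) := by
          have key : P ^ ((1:ℝ)/2) * (A ^ (-(1/2):ℝ) * P ^ (-(1/2):ℝ)) = A ^ (-(1/2):ℝ) := by
            calc P ^ ((1:ℝ)/2) * (A ^ (-(1/2):ℝ) * P ^ (-(1/2):ℝ))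
                = (P ^ ((1:ℝ)/2) * P ^ (-(1/2):ℝ)) * A ^ (-(1/2):ℝ) := by ring
              _ = A ^ (-(1/2):ℝ) := by rw [h5, one_mul]
          rw [key, hcdef]; ring
      _ ≤ P ^ ((1:ℝ)/2) * ((Kᵀ * K + Matrix.diagonal l).det) ^ (-(1/2) : ℝ) *
            Real.exp (-(1/(2*σ2)) * (z ⬝ᵥ
              (((1 : Matrix (Fin n) (Fin n) ℝ) + K * (Matrix.diagonal l)⁻¹ * Kᵀ)⁻¹ *ᵥ z))) *
            ∏ i, (l i)⁻¹ := by
          refine mul_le_mul (mul_le_mul (mul_le_mul le_rfl m1 n2 n1) m2 n3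
            (mul_nonneg n1 n5)) m3 n4 (mul_nonneg (mul_nonneg n1 n5) n6)
      _ = _ := by rw [h4]
  -- measurability of T
  have hSm : MeasurableSet ((Ici (1:ℝ)) ×ˢ S2) :=
    measurableSet_Ici.prod (MeasurableSet.univ_pi fun _ => measurableSet_Icc)
  have hTm : MeasurableSet T := hSm.preimage e.measurable
  -- computing the lower-bound integral
  have key : (∫⁻ l in T, ENNReal.ofReal (c * (l 0)⁻¹)) = ⊤ := by
    have hmp := MeasureTheory.volume_preserving_piFinSuccAbove (fun _ : Fin (n+1) => ℝ) 0
    have hemb := (MeasurableEquiv.piFinSuccAbove (fun _ : Fin (n+1) => ℝ) 0).measurableEmbedding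
    have hcomp := hmp.setLIntegral_comp_preimage_emb hemb
      (fun p : ℝ × (Fin n → ℝ) => ENNReal.ofReal (c * p.1⁻¹)) ((Ici (1:ℝ)) ×ˢ S2)
    have hfun : (∫⁻ l in T, ENNReal.ofReal (c * (l 0)⁻¹)) =
        ∫⁻ p in (Ici (1:ℝ)) ×ˢ S2, ENNReal.ofReal (c * p.1⁻¹) := by
      rw [← hcomp]; rfl
    rw [hfun]
    have hmeas : AEMeasurable (fun p : ℝ × (Fin n → ℝ) => ENNReal.ofReal (c * p.1⁻¹))
        ((volume.restrict (Ici (1:ℝ))).prod (volume.restrict S2)) := by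
      apply Measurable.aemeasurable
      exact (measurable_const.mul (measurable_fst.inv)).ennreal_ofReal
    have hS2vol : volume S2 = 1 := by
      rw [hS2def, volume_pi_pi]
      simp [Real.volume_Icc]
      norm_num
    rw [MeasureTheory.Measure.volume_eq_prod, ← Measure.prod_restrict, lintegral_prod _ hmeas]
    have hinner : ∀ x : ℝ, (∫⁻ _y in S2, ENNReal.ofReal (c * x⁻¹)) =
        ENNReal.ofReal (c * x⁻¹) := by
      intro x
      rw [lintegral_const, Measure.restrict_apply_univ, hS2vol, mul_one]
    simp_rw [hinner]
    have : (∫⁻ x in Ici (1:ℝ), ENNReal.ofReal (c * x⁻¹)) =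
        ENNReal.ofReal c * ∫⁻ x in Ici (1:ℝ), ENNReal.ofReal x⁻¹ := by
      simp_rw [ENNReal.ofReal_mul hc.le]
      exact lintegral_const_mul' _ _ ENNReal.ofReal_ne_top
    rw [this, lint_inv_top, ENNReal.mul_top]
    exact (ENNReal.ofReal_pos.2 hc).ne'
  refine top_le_iff.1 ?_
  calc (⊤ : ENNReal) = ∫⁻ l in T, ENNReal.ofReal (c * (l 0)⁻¹) := key.symm
    _ ≤ ∫⁻ l in T, ENNReal.ofReal ((∏ i, (l i) ^ ((1:ℝ)/2)) *
          ((Kᵀ * K + Matrix.diagonal l).det) ^ (-(1/2) : ℝ) *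
          Real.exp (-(1/(2*σ2)) * (z ⬝ᵥ
            (((1 : Matrix (Fin n) (Fin n) ℝ) + K * (Matrix.diagonal l)⁻¹ * Kᵀ)⁻¹ *ᵥ z))) *
          ∏ i, (l i)⁻¹) :=
        setLIntegral_mono' hTm (fun l hl => ENNReal.ofReal_le_ofReal (hpt l hl))
    _ ≤ _ := lintegral_mono_set hTsub
end
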